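/- Let d be a positive integer, L_1, …, L_d > 0 real, n_1, …, n_d positive integers, 0 < α < 1, D > 0, and set λ := Σ_{i=1}^d π² n_i² / L_i². Let g : [0, ∞) → ℝ be continuous on [0, t], differentiable on (0, t), with g(0) = 0 and g'(s) > 0 for 0 < s < t. Then the separated function u(x, τ) := (∏_{i=1}^d sin(π n_i x_i / L_i)) · E_α(−λ D g(τ)^α) satisfies the g-fractional diffusion equation at time t: for every x ∈ ℝ^d, (1/Γ(1−α)) ∫_0^t (g(t) − g(τ))^{−α} (∂u/∂τ)(x, τ) dτ = D Σ_{i=1}^d (∂²u/∂x_i²)(x, t); moreover u(x, t) = 0 whenever some coordinate x_i equals 0 or L_i. -/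

import Mathlib

open Real MeasureTheory

/-- The one-parameter Mittag-Leffler function `E_α(x) = Σ_{k=0}^∞ x^k / Γ(α k + 1)`. -/
noncomputable def mittagLeffler (α : ℝ) (x : ℝ) : ℝ :=
  ∑' k : ℕ, x ^ k / Real.Gamma (α * k + 1)

section Aux

open Filter intervalIntegral

lemma gamma_summable {α : ℝ} (hα : 0 < α) {R : ℝ} (hR : 0 ≤ R) :
    Summable (fun k : ℕ => ((k : ℝ) + 1) * R ^ k / Real.Gamma (α * k + 1)) := by
  set C : ℝ := (2 * (R + 1)) ^ (1 / α) with hC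
  have hR1 : (1:ℝ) < 2 * (R + 1) := by nlinarith
  have hCpos : 0 < C := Real.rpow_pos_of_pos (by linarith) _
  have hC1 : 1 ≤ C := Real.one_le_rpow (le_of_lt hR1) (by positivity)
  have hfac : ∀ᶠ m : ℕ in atTop, C ^ m ≤ (m.factorial : ℝ) := by
    have := FloorSemiring.tendsto_pow_div_factorial_atTop C
    have h2 := (this.eventually (eventually_le_nhds (by norm_num : (0:ℝ) < 1)))
    filter_upwards [h2] with m hm
    have hfp : (0:ℝ) < (m.factorial : ℝ) := by positivity
    rw [div_le_iff₀ hfp] at hm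
    simpa using hm
  obtain ⟨M, hM⟩ := eventually_atTop.1 hfac
  have htend : Tendsto (fun k : ℕ => α * (k:ℝ)) atTop atTop :=
    (tendsto_natCast_atTop_atTop.const_mul_atTop hα)
  have key : ∀ᶠ k : ℕ in atTop,
      ((k : ℝ) + 1) * R ^ k / Real.Gamma (α * k + 1) ≤ C * (((k:ℝ)+1) * (1/2) ^ k) := by
    filter_upwards [htend.eventually_ge_atTop ((M:ℝ) + 1)] with k hk
    set m : ℕ := ⌊α * (k:ℝ)⌋₊ with hm
    have hαk : (0:ℝ) ≤ α * k := by positivity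
    have hfl : (m:ℝ) ≤ α * k := Nat.floor_le hαk
    have hfl2 : α * (k:ℝ) - 1 ≤ (m:ℝ) := by
      have := Nat.lt_floor_add_one (α * (k:ℝ)); linarith
    have hmM : M ≤ m := by
      have : (M:ℝ) ≤ (m:ℝ) := by linarith
      exact_mod_cast this
    have hgam : (2 * (R+1)) ^ k / C ≤ Real.Gamma (α * k + 1) := by
      have h1 : Real.Gamma ((m:ℝ) + 1) = (m.factorial : ℝ) := Real.Gamma_nat_eq_factorial m
      have h2 : (m.factorial : ℝ) ≤ Real.Gamma (α * k + 1) := by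
        rw [← h1]
        rcases eq_or_lt_of_le hfl with h | h
        · rw [h]
        · have hm1 : 1 ≤ m := Nat.le_floor (by push_cast; linarith)
          have hm1' : (1:ℝ) ≤ (m:ℝ) := by exact_mod_cast hm1
          refine le_of_lt (Real.Gamma_strictMonoOn_Ici ?_ ?_ (by linarith))
          · simp only [Set.mem_Ici]; linarith
          · simp only [Set.mem_Ici]; linarith
      have h3 : C ^ (α * (k:ℝ) - 1) ≤ C ^ (m:ℕ) := by
        rw [← Real.rpow_natCast C m]
        exact Real.rpow_le_rpow_of_exponent_le hC1 (by linarith)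
      have h4 : C ^ (α * (k:ℝ) - 1) = (2*(R+1)) ^ k / C := by
        have e1 : C ^ (α * (k:ℝ)) = (2*(R+1)) ^ k := by
          rw [hC, ← Real.rpow_mul (by linarith : (0:ℝ) ≤ 2*(R+1)),
            show 1/α * (α * (k:ℝ)) = (k:ℝ) by field_simp]
          exact Real.rpow_natCast _ k
        rw [Real.rpow_sub hCpos, Real.rpow_one, e1]
      calc (2 * (R+1)) ^ k / C = C ^ (α * (k:ℝ) - 1) := h4.symm
        _ ≤ C ^ (m:ℕ) := h3
        _ ≤ (m.factorial : ℝ) := hM m hmM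
        _ ≤ _ := h2
    have hΓpos : 0 < Real.Gamma (α * k + 1) := Real.Gamma_pos_of_pos (by linarith)
    have hden : (0:ℝ) < (2 * (R+1)) ^ k / C := by positivity
    calc ((k : ℝ) + 1) * R ^ k / Real.Gamma (α * k + 1)
        ≤ ((k : ℝ) + 1) * R ^ k / ((2 * (R+1)) ^ k / C) :=
          div_le_div_of_nonneg_left (by positivity) hden hgam
      _ = C * (((k:ℝ)+1) * (R / (2*(R+1))) ^ k) := by
          rw [div_pow]
          field_simp
      _ ≤ C * (((k:ℝ)+1) * (1/2) ^ k) := by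
          have : (R / (2*(R+1))) ^ k ≤ (1/2:ℝ) ^ k := by
            apply pow_le_pow_left₀ (by positivity)
            rw [div_le_div_iff₀ (by linarith) (by norm_num)]
            linarith
          have hk1 : (0:ℝ) ≤ (k:ℝ)+1 := by positivity
          nlinarith [this, hCpos.le, mul_le_mul_of_nonneg_left this hk1]
  have hsum : Summable (fun k : ℕ => C * (((k:ℝ)+1) * (1/2) ^ k)) := by
    apply Summable.mul_left
    have h1 : Summable (fun k : ℕ => (k:ℝ) ^ 1 * (1/2) ^ k) :=
      summable_pow_mul_geometric_of_norm_lt_one 1 (by rw [Real.norm_eq_abs, abs_of_nonneg (by norm_num : (0:ℝ) ≤ 1/2)]; norm_num)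
    have h2 : Summable (fun k : ℕ => ((1:ℝ)/2) ^ k) := summable_geometric_two
    simpa [add_mul, pow_one] using h1.add h2
  apply summable_of_isBigO_nat hsum
  apply Filter.Eventually.isBigO
  filter_upwards [key] with k hk
  have hΓpos : 0 < Real.Gamma (α * k + 1) := Real.Gamma_pos_of_pos (by positivity)
  rw [Real.norm_of_nonneg (by positivity)]
  exact hk

lemma gammaArgPos {α : ℝ} (hα : 0 < α) (k : ℕ) : 0 < Real.Gamma (α * k + 1) :=
  Real.Gamma_pos_of_pos (by positivity)

lemma ml_term_summable {α : ℝ} (hα : 0 < α) (y : ℝ) :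
    Summable (fun k : ℕ => y ^ k / Real.Gamma (α * k + 1)) := by
  apply Summable.of_norm
  refine Summable.of_nonneg_of_le (fun k => norm_nonneg _) (fun k => ?_)
    (gamma_summable hα (abs_nonneg y))
  have hΓ := gammaArgPos hα k
  rw [norm_div, Real.norm_of_nonneg hΓ.le, Real.norm_eq_abs, abs_pow]
  gcongr
  exact le_mul_of_one_le_left (by positivity) (by push_cast; linarith [Nat.cast_nonneg (α := ℝ) k])

lemma mlDeriv_summable {α : ℝ} (hα : 0 < α) {B : ℝ} (hB : 0 ≤ B) :
    Summable (fun k : ℕ => ((k : ℝ)) * B ^ (k - 1) / Real.Gamma (α * k + 1)) := by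
  refine Summable.of_nonneg_of_le (fun k => by positivity) (fun k => ?_)
    (gamma_summable hα (by positivity : (0:ℝ) ≤ B + 1))
  have hΓ := gammaArgPos hα k
  gcongr
  · linarith [Nat.cast_nonneg (α := ℝ) k]
  · calc B ^ (k-1) ≤ (B+1) ^ (k-1) := by gcongr; linarith
      _ ≤ (B+1) ^ k := pow_le_pow_right₀ (by linarith) (Nat.sub_le k 1)

lemma hasDerivAt_mittagLeffler {α : ℝ} (hα : 0 < α) (y : ℝ) :
    HasDerivAt (mittagLeffler α) (∑' k : ℕ, (k : ℝ) * y ^ (k - 1) / Real.Gamma (α * k + 1)) y := by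
  have hml : mittagLeffler α = fun z => ∑' k : ℕ, z ^ k / Real.Gamma (α * k + 1) := rfl
  rw [hml]
  refine hasDerivAt_tsum_of_isPreconnected
    (u := fun k : ℕ => ((k:ℝ)+1) * (|y|+1) ^ k / Real.Gamma (α * k + 1))
    (gamma_summable hα (by positivity)) (isOpen_Ioo (a := -(|y|+1)) (b := |y|+1))
    isPreconnected_Ioo (fun k z _ => (hasDerivAt_pow k z).div_const _)
    (fun k z hz => ?_) ?_ (ml_term_summable hα y) ?_
  · have hΓ := gammaArgPos hα k
    rw [norm_div, Real.norm_of_nonneg hΓ.le, norm_mul, Real.norm_eq_abs, Real.norm_eq_abs,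
      abs_pow, Nat.abs_cast]
    have hz' : |z| ≤ |y| + 1 := by
      rcases hz with ⟨h1, h2⟩; rw [abs_le]; constructor <;> linarith
    have h1 : |z| ^ (k-1) ≤ (|y|+1) ^ k :=
      calc |z| ^ (k-1) ≤ (|y|+1) ^ (k-1) := pow_le_pow_left₀ (abs_nonneg z) hz' _
        _ ≤ (|y|+1) ^ k := pow_le_pow_right₀ (by linarith [abs_nonneg y]) (Nat.sub_le k 1)
    exact (div_le_div_iff_of_pos_right hΓ).2 (mul_le_mul (by linarith) h1 (pow_nonneg (abs_nonneg z) _)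
      (by linarith [Nat.cast_nonneg (α := ℝ) k]))
  · constructor <;> [linarith [neg_abs_le y]; linarith [le_abs_self y]]
  · constructor <;> [linarith [neg_abs_le y]; linarith [le_abs_self y]]

set_option maxHeartbeats 1000000 in
lemma realBeta_integrable {a b T : ℝ} (ha : 0 < a) (hb : 0 < b) (hT : 0 < T) :
    IntervalIntegrable (fun s : ℝ => s ^ (a-1) * (T - s) ^ (b-1)) volume 0 T := by
  have h1 : IntervalIntegrable (fun s : ℝ => s ^ (a-1) * (T - s) ^ (b-1)) volume 0 (T/2) := by
    apply IntervalIntegrable.mul_continuousOn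
    · exact intervalIntegral.intervalIntegrable_rpow' (by linarith)
    · apply ContinuousOn.rpow_const
      · exact (continuous_const.sub continuous_id).continuousOn
      · intro x hx
        rw [Set.uIcc_of_le (by linarith : (0:ℝ) ≤ T/2)] at hx
        exact Or.inl (by intro h0; have := hx.2; linarith)
  have h2 : IntervalIntegrable (fun s : ℝ => s ^ (a-1) * (T - s) ^ (b-1)) volume (T/2) T := by
    have hint : IntervalIntegrable (fun s : ℝ => (T - s) ^ (b-1)) volume (T/2) T := by
      have h0 := (intervalIntegral.intervalIntegrable_rpow' (r := b-1)
        (by linarith) (a := 0) (b := T/2)).comp_sub_left T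
      have e1 : T - 0 = T := by ring
      have e2 : T - T/2 = T/2 := by ring
      rw [e1, e2] at h0
      exact h0.symm
    apply hint.continuousOn_mul
    apply ContinuousOn.rpow_const continuous_id.continuousOn
    intro x hx
    rw [Set.uIcc_of_le (by linarith : T/2 ≤ T)] at hx
    exact Or.inl (by intro h0; simp only [id_eq] at h0; have := hx.1; linarith)
  exact h1.trans h2

lemma realBeta_eval {a b T : ℝ} (ha : 0 < a) (hb : 0 < b) (hT : 0 < T) :
    ∫ s in (0:ℝ)..T, s ^ (a-1) * (T - s) ^ (b-1)
      = T ^ (a+b-1) * (Real.Gamma a * Real.Gamma b / Real.Gamma (a+b)) := by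
  have hab : 0 < a + b := by linarith
  have hΓab : Real.Gamma (a+b) ≠ 0 := (Real.Gamma_pos_of_pos hab).ne'
  have hΓabC : Complex.Gamma ((a:ℂ) + (b:ℂ)) ≠ 0 := by
    rw [← Complex.ofReal_add, Complex.Gamma_ofReal]
    exact_mod_cast hΓab
  have hbeta : Complex.Gamma a * Complex.Gamma b
      = Complex.Gamma ((a:ℂ)+(b:ℂ)) * Complex.betaIntegral a b :=
    Complex.Gamma_mul_Gamma_eq_betaIntegral (by simpa using ha) (by simpa using hb)
  have hbi : Complex.betaIntegral a b
      = Complex.Gamma a * Complex.Gamma b / Complex.Gamma ((a:ℂ)+(b:ℂ)) := by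
    rw [hbeta]; field_simp
  have hscaled := Complex.betaIntegral_scaled (a:ℂ) (b:ℂ) hT
  have hcongr : (∫ x in (0:ℝ)..T, (x:ℂ) ^ ((a:ℂ) - 1) * ((T:ℂ) - x) ^ ((b:ℂ) - 1))
      = ((∫ s in (0:ℝ)..T, s ^ (a-1) * (T - s) ^ (b-1) : ℝ) : ℂ) := by
    rw [← intervalIntegral.integral_ofReal]
    apply intervalIntegral.integral_congr
    intro x hx
    rw [Set.uIcc_of_le hT.le] at hx
    simp only []
    rw [Complex.ofReal_mul, Complex.ofReal_cpow hx.1,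
      Complex.ofReal_cpow (by linarith [hx.2] : (0:ℝ) ≤ T - x)]
    push_cast
    ring
  have hC : ((∫ s in (0:ℝ)..T, s ^ (a-1) * (T - s) ^ (b-1) : ℝ) : ℂ)
      = ((T ^ (a+b-1) * (Real.Gamma a * Real.Gamma b / Real.Gamma (a+b)) : ℝ) : ℂ) := by
    rw [← hcongr, hscaled, hbi]
    rw [show ((a:ℂ) + (b:ℂ) - 1) = ((a+b-1 : ℝ) : ℂ) by push_cast; ring,
      ← Complex.ofReal_cpow hT.le,
      show ((a:ℂ) + (b:ℂ)) = ((a+b : ℝ) : ℂ) by push_cast; ring,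
      Complex.Gamma_ofReal, Complex.Gamma_ofReal, Complex.Gamma_ofReal]
    push_cast
    ring
  exact_mod_cast hC

lemma mlDeriv_summable' {α : ℝ} (hα : 0 < α) (w : ℝ) :
    Summable (fun k : ℕ => ((k : ℝ)) * w ^ (k - 1) / Real.Gamma (α * k + 1)) := by
  apply Summable.of_norm
  refine Summable.of_nonneg_of_le (fun k => norm_nonneg _) (fun k => ?_)
    (mlDeriv_summable hα (abs_nonneg w))
  have hΓ := gammaArgPos hα k
  rw [norm_div, Real.norm_of_nonneg hΓ.le, norm_mul, Real.norm_eq_abs, Real.norm_eq_abs,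
    abs_pow, Nat.abs_cast]

/-- the derivative of the Mittag-Leffler function as a tsum -/
noncomputable def mlDeriv (α : ℝ) (w : ℝ) : ℝ :=
  ∑' k : ℕ, (k : ℝ) * w ^ (k - 1) / Real.Gamma (α * k + 1)

end Aux

/-- On the rectangle with side lengths L_i, with mode numbers n_i,
0 < α < 1, D > 0, λ := Σ_i π² n_i²/L_i², and g continuous on [0,t], differentiable on
(0,t), g(0) = 0, g' > 0 on (0,t), the separated function
u(x, τ) := (∏_i sin(π n_i x_i / L_i)) · E_α(−λ D g(τ)^α)
satisfies the g-fractional diffusion equation at time t, and vanishes on the boundary. -/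
theorem g_fractional_diffusion_rectangle (d : ℕ) (hd : 0 < d)
    (L : Fin d → ℝ) (hL : ∀ i, 0 < L i)
    (n : Fin d → ℕ) (hn : ∀ i, 0 < n i)
    (α D t : ℝ) (hα : 0 < α) (hα1 : α < 1) (hD : 0 < D) (ht : 0 < t)
    (g g' : ℝ → ℝ)
    (hgc : ContinuousOn g (Set.Icc 0 t))
    (hgd : ∀ s ∈ Set.Ioo 0 t, HasDerivAt g (g' s) s)
    (hg0 : g 0 = 0)
    (hg' : ∀ s ∈ Set.Ioo 0 t, 0 < g' s)
    (lam : ℝ) (hlam : lam = ∑ i : Fin d, π ^ 2 * (n i : ℝ) ^ 2 / L i ^ 2)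
    (u : (Fin d → ℝ) → ℝ → ℝ)
    (hu : u = fun x τ =>
      (∏ j : Fin d, Real.sin (π * n j * x j / L j)) * mittagLeffler α (-(lam * D) * g τ ^ α)) :
    (∀ x : Fin d → ℝ,
        (1 / Real.Gamma (1 - α)) *
            ∫ τ in Set.Ioo 0 t, (g t - g τ) ^ (-α) * deriv (fun τ => u x τ) τ =
          D * ∑ i : Fin d, deriv (deriv (fun y : ℝ => u (Function.update x i y) t)) (x i)) ∧
    (∀ x : Fin d → ℝ, (∃ i, x i = 0 ∨ x i = L i) → u x t = 0) := by
  subst hu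
  set c : ℝ := lam * D with hc
  have hlam_pos : 0 < lam := by
    rw [hlam]
    apply Finset.sum_pos
    · intro i _
      have := hL i; have := hn i
      have : (0:ℝ) < (n i : ℝ) := by exact_mod_cast hn i
      positivity
    · have : Nonempty (Fin d) := Fin.pos_iff_nonempty.mp hd
      exact Finset.univ_nonempty
  have hcpos : 0 < c := mul_pos hlam_pos hD
  -- monotonicity of g
  have hg_mono : StrictMonoOn g (Set.Icc 0 t) := by
    apply strictMonoOn_of_deriv_pos (convex_Icc 0 t) hgc
    intro s hs
    rw [interior_Icc] at hs
    rw [(hgd s hs).deriv]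
    exact hg' s hs
  set T : ℝ := g t with hTdef
  have hT : 0 < T := by
    have := hg_mono (Set.left_mem_Icc.2 ht.le) (Set.right_mem_Icc.2 ht.le) ht
    rwa [hg0] at this
  have hgpos : ∀ τ ∈ Set.Ioo 0 t, 0 < g τ := by
    intro τ hτ
    have := hg_mono (Set.left_mem_Icc.2 ht.le) ⟨hτ.1.le, hτ.2.le⟩ hτ.1
    rwa [hg0] at this
  have hglt : ∀ τ ∈ Set.Ioo 0 t, g τ < T := fun τ hτ =>
    hg_mono ⟨hτ.1.le, hτ.2.le⟩ (Set.right_mem_Icc.2 ht.le) hτ.2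
  have himg : g '' Set.Ioo 0 t = Set.Ioo 0 T := by
    apply Set.Subset.antisymm
    · rintro _ ⟨τ, hτ, rfl⟩
      exact ⟨hgpos τ hτ, hglt τ hτ⟩
    · have h2 := intermediate_value_Ioo ht.le hgc
      rwa [hg0] at h2
  have hΓ1α : 0 < Real.Gamma (1 - α) := Real.Gamma_pos_of_pos (by linarith)
  constructor
  · intro x
    set P : ℝ := ∏ j : Fin d, Real.sin (π * n j * x j / L j) with hP
    -- SPATIAL SIDE
    have hRHS : D * ∑ i : Fin d, deriv (deriv (fun y : ℝ =>
        (∏ j : Fin d, Real.sin (π * n j * (Function.update x i y) j / L j)) *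
          mittagLeffler α (-c * g t ^ α))) (x i)
        = -c * P * mittagLeffler α (-c * T ^ α) := by
      have hstep : ∀ i : Fin d, deriv (deriv (fun y : ℝ =>
          (∏ j : Fin d, Real.sin (π * n j * (Function.update x i y) j / L j)) *
            mittagLeffler α (-c * g t ^ α))) (x i)
          = -(π^2 * (n i:ℝ)^2 / L i^2) * P * mittagLeffler α (-c * T ^ α) := by
        intro i
        set E : ℝ := mittagLeffler α (-c * g t ^ α) with hE
        set ci : ℝ := π * n i / L i with hci
        set Ai : ℝ := (∏ j ∈ Finset.univ.erase i, Real.sin (π * n j * x j / L j)) * E with hAi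
        have hfun : (fun y : ℝ => (∏ j : Fin d, Real.sin (π * n j * (Function.update x i y) j / L j)) * E)
            = fun y => Real.sin (ci * y) * Ai := by
          funext y
          rw [← Finset.mul_prod_erase Finset.univ _ (Finset.mem_univ i)]
          rw [Function.update_self]
          have hpe : ∏ j ∈ Finset.univ.erase i, Real.sin (π * n j * (Function.update x i y) j / L j)
              = ∏ j ∈ Finset.univ.erase i, Real.sin (π * n j * x j / L j) :=
            Finset.prod_congr rfl fun j hj => by
              rw [Function.update_of_ne (Finset.ne_of_mem_erase hj)]
          rw [hpe, show π * n i * y / L i = ci * y by rw [hci]; ring, hAi]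
          ring
        have hd1 : ∀ y : ℝ, HasDerivAt (fun z => Real.sin (ci * z) * Ai)
            (ci * Ai * Real.cos (ci * y)) y := by
          intro y
          have h := (((Real.hasDerivAt_sin (ci*y)).comp y
            ((hasDerivAt_id y).const_mul ci)).mul_const Ai)
          exact h.congr_deriv (by ring)
        have hd2 : deriv (fun z => Real.sin (ci * z) * Ai)
            = fun y => ci * Ai * Real.cos (ci * y) := funext fun y => (hd1 y).deriv
        have hd3 : HasDerivAt (fun y => ci * Ai * Real.cos (ci * y))
            (ci * Ai * (-Real.sin (ci * x i) * ci)) (x i) := by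
          have h := (((Real.hasDerivAt_cos (ci * x i)).comp (x i)
            ((hasDerivAt_id (x i)).const_mul ci)).const_mul (ci * Ai))
          exact h.congr_deriv (by ring)
        have hPsplit : P = Real.sin (π * n i * x i / L i) *
            ∏ j ∈ Finset.univ.erase i, Real.sin (π * n j * x j / L j) :=
          (Finset.mul_prod_erase Finset.univ _ (Finset.mem_univ i)).symm
        calc deriv (deriv (fun y : ℝ =>
              (∏ j : Fin d, Real.sin (π * n j * (Function.update x i y) j / L j)) * E)) (x i)
            = deriv (fun y => ci * Ai * Real.cos (ci * y)) (x i) := by rw [hfun, hd2]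
          _ = ci * Ai * (-Real.sin (ci * x i) * ci) := hd3.deriv
          _ = -(π^2 * (n i:ℝ)^2 / L i^2) * P * E := by
              rw [show ci * x i = π * n i * x i / L i by rw [hci]; ring, hPsplit, hAi, hci]
              ring
      rw [Finset.sum_congr rfl (fun i _ => hstep i)]
      have hsum : ∑ i : Fin d, -(π^2 * (n i:ℝ)^2 / L i^2) * P * mittagLeffler α (-c * T ^ α)
          = (∑ i : Fin d, -(π^2 * (n i:ℝ)^2 / L i^2)) * (P * mittagLeffler α (-c * T ^ α)) := by
        rw [Finset.sum_mul]
        exact Finset.sum_congr rfl fun i _ => by ring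
      rw [hsum, Finset.sum_neg_distrib, ← hlam, hc]
      ring
    -- TIME DERIVATIVE
    have hderiv_u : ∀ τ ∈ Set.Ioo 0 t,
        HasDerivAt (fun τ => P * mittagLeffler α (-c * g τ ^ α))
          (P * (mlDeriv α (-c * g τ ^ α) * (-c * (α * g τ ^ (α-1) * g' τ)))) τ := by
      intro τ hτ
      have h1 : HasDerivAt (fun τ => g τ ^ α) (g' τ * α * g τ ^ (α-1)) τ :=
        (hgd τ hτ).rpow_const (Or.inl (hgpos τ hτ).ne')
      have h2 := h1.const_mul (-c)
      have h3 := (hasDerivAt_mittagLeffler hα (-c * g τ ^ α)).comp τ h2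
      have h4 := h3.const_mul P
      have h4' : HasDerivAt (fun τ => P * mittagLeffler α (-c * g τ ^ α))
          ((P * ((∑' k : ℕ, (k : ℝ) * (-c * g τ ^ α) ^ (k - 1) / Real.Gamma (α * k + 1)) *
            (-c * (g' τ * α * g τ ^ (α-1)))))) τ := by
        simpa [Function.comp] using h4
      convert h4' using 1
      rw [mlDeriv]
      ring
    -- THE INTEGRAL
    have hInt : ∫ τ in Set.Ioo 0 t, (g t - g τ) ^ (-α) *
        deriv (fun τ => P * mittagLeffler α (-c * g τ ^ α)) τ
        = -c * P * Real.Gamma (1-α) * mittagLeffler α (-c * T ^ α) := by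
      set H : ℝ → ℝ := fun s => (T - s) ^ (-α) *
        (P * (mlDeriv α (-c * s ^ α) * (-c * (α * s ^ (α-1))))) with hH
      have step1 : ∫ τ in Set.Ioo 0 t, (g t - g τ) ^ (-α) *
          deriv (fun τ => P * mittagLeffler α (-c * g τ ^ α)) τ
          = ∫ τ in Set.Ioo 0 t, |g' τ| • H (g τ) := by
        apply setIntegral_congr_fun measurableSet_Ioo
        intro τ hτ
        simp only []
        rw [(hderiv_u τ hτ).deriv, abs_of_pos (hg' τ hτ)]
        simp only [hH, smul_eq_mul, ← hTdef]
        ring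
      have step2 : ∫ τ in Set.Ioo 0 t, |g' τ| • H (g τ) = ∫ s in Set.Ioo 0 T, H s := by
        rw [← himg]
        exact (integral_image_eq_integral_abs_deriv_smul measurableSet_Ioo
          (fun τ hτ => (hgd τ hτ).hasDerivWithinAt)
          (hg_mono.injOn.mono Set.Ioo_subset_Icc_self) H).symm
      set A : ℕ → ℝ := fun k => P * (-c) * α *
        (((k:ℝ)+1) * (-c)^k / Real.Gamma (α*k+α+1)) with hA
      have hΓne : ∀ k : ℕ, Real.Gamma (α*k+1) ≠ 0 := fun k => (gammaArgPos hα k).ne'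
      have hΓαpos : ∀ k : ℕ, (0:ℝ) < Real.Gamma (α*k+α) := fun k =>
        Real.Gamma_pos_of_pos (by positivity)
      have hΓα1pos : ∀ k : ℕ, (0:ℝ) < Real.Gamma (α*k+α+1) := fun k =>
        Real.Gamma_pos_of_pos (by positivity)
      have hrec : ∀ k : ℕ, Real.Gamma (α*k+α+1) = (α*k+α) * Real.Gamma (α*k+α) := fun k =>
        Real.Gamma_add_one (by positivity)
      have step3 : ∀ s ∈ Set.Ioo (0:ℝ) T,
          H s = ∑' k : ℕ, A k * (s ^ (α*k+α-1) * (T - s)^(-α)) := by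
        intro s hs
        have hs0 : (0:ℝ) < s := hs.1
        have hterm : ∀ k : ℕ, A k * (s ^ (α*k+α-1) * (T-s)^(-α))
            = ((T-s)^(-α) * (P * (-c) * α * s^(α-1))) *
              (((k:ℝ)+1) * (-c * s^α)^k / Real.Gamma (α*k+α+1)) := by
          intro k
          have e1 : s ^ (α*k+α-1) = (s^α)^k * s^(α-1) := by
            rw [← Real.rpow_natCast (s^α) k, ← Real.rpow_mul hs0.le, ← Real.rpow_add hs0]
            congr 1
            ring
          rw [hA]
          simp only []
          rw [e1, mul_pow]
          ring
        rw [tsum_congr hterm, tsum_mul_left]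
        have hsum2 : ∑' k : ℕ, (((k:ℝ)+1) * (-c*s^α)^k / Real.Gamma (α*k+α+1))
            = mlDeriv α (-c*s^α) := by
          have hS := mlDeriv_summable' hα (-c*s^α)
          rw [mlDeriv, Summable.tsum_eq_zero_add hS]
          simp only [Nat.cast_zero, zero_mul, zero_div, zero_add]
          apply tsum_congr
          intro k
          simp only [Nat.add_sub_cancel]
          push_cast
          rw [show α*((k:ℝ)+1)+1 = α*(k:ℝ)+α+1 by ring]
        rw [hsum2, hH]
        ring
      have hik : ∀ k : ℕ, IntegrableOn (fun s => s ^ (α*k+α-1) * (T-s)^(-α))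
          (Set.Ioo (0:ℝ) T) := by
        intro k
        have h0 := realBeta_integrable (a := α*k+α) (b := 1-α)
          (by positivity) (by linarith) hT
        rw [show (1-α)-1 = -α by ring] at h0
        have h2 := (intervalIntegrable_iff_integrableOn_Ioc_of_le hT.le).mp h0
        exact h2.mono_set Set.Ioo_subset_Ioc_self
      have hbk : ∀ k : ℕ, ∫ s in Set.Ioo (0:ℝ) T, s ^ (α*k+α-1) * (T-s)^(-α)
          = T^(α*k) * (Real.Gamma (α*k+α) * Real.Gamma (1-α) / Real.Gamma (α*k+1)) := by
        intro k
        have h := realBeta_eval (a := α*k+α) (b := 1-α) (by positivity) (by linarith) hT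
        rw [show (1-α)-1 = -α by ring, show α*(k:ℝ)+α+(1-α)-1 = α*(k:ℝ) by ring,
          show α*(k:ℝ)+α+(1-α) = α*(k:ℝ)+1 by ring,
          intervalIntegral.integral_of_le hT.le, integral_Ioc_eq_integral_Ioo] at h
        exact h
      have hbknn : ∀ k : ℕ, (0:ℝ) ≤ T^(α*k) * (Real.Gamma (α*k+α) * Real.Gamma (1-α) /
          Real.Gamma (α*k+1)) := by
        intro k
        have := hΓαpos k
        have := gammaArgPos hα k
        positivity
      have hAabs : ∀ k : ℕ, |A k| = |P| * c * α *
          (((k:ℝ)+1) * c^k / Real.Gamma (α*k+α+1)) := by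
        intro k
        have hkp : (0:ℝ) ≤ (k:ℝ)+1 := by positivity
        rw [hA]
        simp only []
        rw [abs_mul, abs_mul, abs_mul, abs_div, abs_mul, abs_pow, abs_neg,
          abs_of_pos hcpos, abs_of_pos hα, abs_of_nonneg hkp,
          abs_of_pos (hΓα1pos k)]
      have hsummand : ∀ k : ℕ, |A k| * (T^(α*k) * (Real.Gamma (α*k+α) * Real.Gamma (1-α) /
          Real.Gamma (α*k+1)))
          = (|P| * c * Real.Gamma (1-α)) * ((c*T^α)^k / Real.Gamma (α*k+1)) := by
        intro k
        rw [hAabs k, hrec k, show (c*T^α)^k = c^k * (T^α)^k from mul_pow c (T^α) k,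
          show (T^α)^k = T^(α*k) by
            rw [← Real.rpow_natCast (T^α) k, ← Real.rpow_mul hT.le]]
        have h1 := (hΓαpos k).ne'
        have h2 := hΓne k
        have h3 : ((k:ℝ)+1) ≠ 0 := by positivity
        have h4 : α*(k:ℝ)+α ≠ 0 := by positivity
        field_simp
      have hSgeo : Summable (fun k : ℕ => (|P| * c * Real.Gamma (1-α)) *
          ((c*T^α)^k / Real.Gamma (α*k+1))) := by
        apply Summable.mul_left
        refine Summable.of_nonneg_of_le (fun k => ?_) (fun k => ?_)
          (gamma_summable hα (by positivity : (0:ℝ) ≤ c*T^α))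
        · have := gammaArgPos hα k
          positivity
        · have := gammaArgPos hα k
          rw [div_le_div_iff₀ this this]
          have hck : (0:ℝ) ≤ (c*T^α)^k := by positivity
          nlinarith [mul_le_mul_of_nonneg_left
            (le_add_of_nonneg_left (Nat.cast_nonneg (α := ℝ) k) : (1:ℝ) ≤ (k:ℝ)+1) hck]
      have hnorm : ∀ k : ℕ, ∫ s in Set.Ioo (0:ℝ) T, ‖A k * (s ^ (α*k+α-1) * (T-s)^(-α))‖
          = |A k| * (T^(α*k) * (Real.Gamma (α*k+α) * Real.Gamma (1-α) / Real.Gamma (α*k+1))) := by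
        intro k
        rw [← hbk k, ← MeasureTheory.integral_const_mul]
        apply setIntegral_congr_fun measurableSet_Ioo
        intro s hs
        simp only []
        rw [norm_mul, Real.norm_eq_abs, Real.norm_eq_abs,
          abs_of_nonneg (mul_nonneg (Real.rpow_nonneg hs.1.le _)
            (Real.rpow_nonneg (by linarith [hs.2] : (0:ℝ) ≤ T - s) _))]
      have hswap : ∫ s in Set.Ioo (0:ℝ) T, (∑' k : ℕ, A k * (s ^ (α*k+α-1) * (T-s)^(-α)))
          = ∑' k : ℕ, ∫ s in Set.Ioo (0:ℝ) T, A k * (s ^ (α*k+α-1) * (T-s)^(-α)) := by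
        refine (MeasureTheory.integral_tsum_of_summable_integral_norm
          (fun k => (hik k).const_mul (A k)) ?_).symm
        exact hSgeo.congr fun k => ((hnorm k).trans (hsummand k)).symm
      have hval : ∀ k : ℕ, ∫ s in Set.Ioo (0:ℝ) T, A k * (s ^ (α*k+α-1) * (T-s)^(-α))
          = (P * (-c) * Real.Gamma (1-α)) * ((-c*T^α)^k / Real.Gamma (α*k+1)) := by
        intro k
        rw [MeasureTheory.integral_const_mul, hbk k, hA]
        simp only []
        rw [hrec k, show (-c*T^α)^k = (-c)^k * (T^α)^k from mul_pow (-c) (T^α) k,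
          show (T^α)^k = T^(α*k) by
            rw [← Real.rpow_natCast (T^α) k, ← Real.rpow_mul hT.le]]
        have h1 := (hΓαpos k).ne'
        have h2 := hΓne k
        have h3 : ((k:ℝ)+1) ≠ 0 := by positivity
        have h4 : α*(k:ℝ)+α ≠ 0 := by positivity
        field_simp
      rw [step1, step2, setIntegral_congr_fun measurableSet_Ioo step3, hswap,
        tsum_congr hval, tsum_mul_left]
      have hmlval : mittagLeffler α (-c * T ^ α)
          = ∑' k : ℕ, (-c*T^α)^k / Real.Gamma (α*k+1) := rfl
      rw [← hmlval]
      ring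
    calc (1 / Real.Gamma (1 - α)) * ∫ τ in Set.Ioo 0 t, (g t - g τ) ^ (-α) *
          deriv (fun τ => P * mittagLeffler α (-(lam*D) * g τ ^ α)) τ
        = (1 / Real.Gamma (1 - α)) * (-c * P * Real.Gamma (1-α) * mittagLeffler α (-c * T ^ α)) := by
          rw [← hInt]
      _ = -c * P * mittagLeffler α (-c * T ^ α) := by
          field_simp
      _ = D * ∑ i : Fin d, deriv (deriv (fun y : ℝ =>
            (∏ j : Fin d, Real.sin (π * n j * (Function.update x i y) j / L j)) *
              mittagLeffler α (-c * g t ^ α))) (x i) := hRHS.symm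
  · rintro x ⟨i, hi⟩
    have hzero : Real.sin (π * n i * x i / L i) = 0 := by
      rcases hi with h | h
      · rw [h]; simp
      · rw [h, mul_div_assoc, div_self (hL i).ne', mul_one, mul_comm]
        exact Real.sin_nat_mul_pi (n i)
    simp only []
    rw [Finset.prod_eq_zero (Finset.mem_univ i) hzero, zero_mul]
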